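/- Let B be an instance of (2,2)-E3-SAT and let I_{2,3}(B) be the one-to-one HRC instance constructed from B as described. Then B is satisfiable if and only if I_{2,3}(B) admits a stable matching. -/

import Mathlib

/-- A one-to-one HRC instance: residents are partitioned into single residents and
ordered couples; all hospitals have capacity 1. -/
structure HRC1 (R H : Type) where
  singles : List R
  couples : List (R × R)
  singlePref : R → List H
  couplePref : R × R → List (H × H)
  hospPref : H → List R

namespace HRC1

/-- `x` precedes `y` on the strict preference list `l`. -/
def Prefers {α : Type} [DecidableEq α] (l : List α) (x y : α) : Prop :=
  x ∈ l ∧ y ∈ l ∧ l.idxOf x < l.idxOf y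

variable {R H : Type} [DecidableEq R] [DecidableEq H]

/-- `M` is a matching of the instance `I`. -/
def IsMatching (I : HRC1 R H) (M : R → Option H) : Prop :=
  (∀ r₁ r₂ h, M r₁ = some h → M r₂ = some h → r₁ = r₂) ∧
  (∀ r ∈ I.singles, ∀ h, M r = some h → h ∈ I.singlePref r) ∧
  (∀ c ∈ I.couples,
    (M c.1 = none ∧ M c.2 = none) ∨
    ∃ hp ∈ I.couplePref c, M c.1 = some hp.1 ∧ M c.2 = some hp.2) ∧
  (∀ r, (M r).isSome → r ∈ I.singles ∨ ∃ c ∈ I.couples, r = c.1 ∨ r = c.2)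

/-- Hospital `h` is unmatched in `M`. -/
def HospFree (M : R → Option H) (h : H) : Prop := ∀ r, M r ≠ some h

/-- Hospital `h` is unmatched in `M`, or prefers `r` to its current assignee. -/
def HospOpenFor (I : HRC1 R H) (M : R → Option H) (h : H) (r : R) : Prop :=
  HospFree M h ∨ ∃ r', M r' = some h ∧ Prefers (I.hospPref h) r r'

/-- Blocking pair consisting of a single resident `r` and a hospital `h`. -/
def BlockSingle (I : HRC1 R H) (M : R → Option H) (r : R) (h : H) : Prop :=
  r ∈ I.singles ∧ h ∈ I.singlePref r ∧
  (M r = none ∨ ∃ h', M r = some h' ∧ Prefers (I.singlePref r) h h') ∧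
  I.HospOpenFor M h r

/-- Blocking pair consisting of a couple `c` and a pair of hospitals `hp` on its joint list. -/
def BlockCouple (I : HRC1 R H) (M : R → Option H) (c : R × R) (hp : H × H) : Prop :=
  c ∈ I.couples ∧ hp ∈ I.couplePref c ∧
  ((M c.1 = none ∧ M c.2 = none) ∨
    ∃ hp' ∈ I.couplePref c, M c.1 = some hp'.1 ∧ M c.2 = some hp'.2 ∧
      Prefers (I.couplePref c) hp hp') ∧
  (M c.1 = some hp.1 ∨ I.HospOpenFor M hp.1 c.1) ∧
  (M c.2 = some hp.2 ∨ I.HospOpenFor M hp.2 c.2)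

/-- `M` is a stable matching of the instance `I`. -/
def Stable (I : HRC1 R H) (M : R → Option H) : Prop :=
  I.IsMatching M ∧ (∀ r h, ¬ I.BlockSingle M r h) ∧ (∀ c hp, ¬ I.BlockCouple M c hp)

end HRC1

/-- An instance of (2,2)-E3-SAT: `m` clauses, each with exactly 3 literals over `n`
variables (a literal is a variable together with a polarity, `true` for positive);
`occ l` enumerates the two occurrences of the literal `l`, so that each of the literals
`vᵢ` and `¬vᵢ` appears exactly twice. -/
structure E3SAT (n m : ℕ) where
  clause : Fin m → Fin 3 → Fin n × Bool
  occ : Fin n × Bool → Fin 2 → Fin m × Fin 3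
  occ_spec : ∀ l r, clause (occ l r).1 (occ l r).2 = l
  occ_inj : ∀ l, occ l 0 ≠ occ l 1
  occ_surj : ∀ j s, ∃ r, occ (clause j s) r = (j, s)

namespace E3SAT

variable {n m : ℕ}

/-- `B` is satisfiable. -/
def Satisfiable (B : E3SAT n m) : Prop :=
  ∃ f : Fin n → Bool, ∀ j : Fin m, ∃ s : Fin 3, f (B.clause j s).1 = (B.clause j s).2

/-- The index (`0` or `1`) of the occurrence of its literal that position `s` of
clause `j` constitutes. -/
def rIdx (B : E3SAT n m) (j : Fin m) (s : Fin 3) : Fin 2 :=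
  if B.occ (B.clause j s) 0 = (j, s) then 0 else 1

end E3SAT

/-- Residents of the instance `I₂₃(B)`: `X i r = x_i^{r+1}`, `Xb i r = x̄_i^{r+1}`,
`P j s = p_j^{s+1}`, `Q j s = q_j^{s+1}` (0-based indices). -/
inductive Res2 (n m : ℕ)
  | X (i : Fin n) (r : Fin 2)
  | Xb (i : Fin n) (r : Fin 2)
  | P (j : Fin m) (s : Fin 3)
  | Q (j : Fin m) (s : Fin 3)
deriving DecidableEq

/-- Hospitals of the instance `I₂₃(B)`: `h i k = h_i^{k+1}`, `y j s = y_j^{s+1}`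
(0-based indices). -/
inductive Hos2 (n m : ℕ)
  | h (i : Fin n) (k : Fin 2)
  | y (j : Fin m) (s : Fin 3)
deriving DecidableEq

variable {n m : ℕ}

/-- The hospital `y(x_i^{r+1})` (for `b = true`) resp. `y(x̄_i^{r+1})` (for `b = false`):
the clause-position hospital of the `(r+1)`-th occurrence of the literal. -/
def yLit (B : E3SAT n m) (i : Fin n) (b : Bool) (r : Fin 2) : Hos2 n m :=
  Hos2.y (B.occ (i, b) r).1 (B.occ (i, b) r).2

/-- The resident `x(y_j^{s+1})`: the occurrence-copy of the literal at position `s`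
of clause `c_j`. -/
def xOfY (B : E3SAT n m) (j : Fin m) (s : Fin 3) : Res2 n m :=
  let l := B.clause j s
  if l.2 then Res2.X l.1 (B.rIdx j s) else Res2.Xb l.1 (B.rIdx j s)

/-- The one-to-one HRC instance `I₂₃(B)` constructed from the (2,2)-E3-SAT
instance `B`. -/
def instI23 (B : E3SAT n m) : HRC1 (Res2 n m) (Hos2 n m) where
  singles := []
  couples :=
    ((List.finRange n).map fun i => (Res2.X i 0, Res2.X i 1)) ++
    ((List.finRange n).map fun i => (Res2.Xb i 0, Res2.Xb i 1)) ++
    ((List.finRange m).flatMap fun j =>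
      (List.finRange 3).map fun s => (Res2.P j s, Res2.Q j s))
  singlePref := fun _ => []
  couplePref := fun c => match c with
    | (Res2.X i r, Res2.X i' r') =>
        if i' = i ∧ r = 0 ∧ r' = 1 then
          [(Hos2.h i 0, Hos2.h i 1), (yLit B i true 0, yLit B i true 1)]
        else []
    | (Res2.Xb i r, Res2.Xb i' r') =>
        if i' = i ∧ r = 0 ∧ r' = 1 then
          [(Hos2.h i 0, Hos2.h i 1), (yLit B i false 0, yLit B i false 1)]
        else []
    | (Res2.P j s, Res2.Q j' s') =>
        if j' = j ∧ s' = s then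
          if s = 0 then [(Hos2.y j 0, Hos2.y j 1)]
          else if s = 1 then [(Hos2.y j 1, Hos2.y j 2)]
          else [(Hos2.y j 2, Hos2.y j 0)]
        else []
    | _ => []
  hospPref := fun hh => match hh with
    | Hos2.h i k =>
        if k = 0 then [Res2.X i 0, Res2.Xb i 0]
        else [Res2.Xb i 1, Res2.X i 1]
    | Hos2.y j s =>
        if s = 0 then [xOfY B j 0, Res2.P j 0, Res2.Q j 2]
        else if s = 1 then [xOfY B j 1, Res2.P j 1, Res2.Q j 0]
        else [xOfY B j 2, Res2.P j 2, Res2.Q j 1]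

section
variable {n m : ℕ} (B : E3SAT n m)

lemma cp_X (i : Fin n) : (instI23 B).couplePref (Res2.X i 0, Res2.X i 1) =
    [(Hos2.h i 0, Hos2.h i 1), (yLit B i true 0, yLit B i true 1)] := by
  simp [instI23]

lemma cp_Xb (i : Fin n) : (instI23 B).couplePref (Res2.Xb i 0, Res2.Xb i 1) =
    [(Hos2.h i 0, Hos2.h i 1), (yLit B i false 0, yLit B i false 1)] := by
  simp [instI23]

lemma cp_PQ (j : Fin m) (s : Fin 3) : (instI23 B).couplePref (Res2.P j s, Res2.Q j s) =
    if s = 0 then [(Hos2.y j 0, Hos2.y j 1)]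
    else if s = 1 then [(Hos2.y j 1, Hos2.y j 2)]
    else [(Hos2.y j 2, Hos2.y j 0)] := by
  simp [instI23]

lemma mem_couples {c : Res2 n m × Res2 n m} : c ∈ (instI23 B).couples ↔
    (∃ i, c = (Res2.X i 0, Res2.X i 1)) ∨ (∃ i, c = (Res2.Xb i 0, Res2.Xb i 1)) ∨
    (∃ j s, c = (Res2.P j s, Res2.Q j s)) := by
  simp [instI23, eq_comm]

end

section
variable {n m : ℕ} (B : E3SAT n m) {M : Res2 n m → Option (Hos2 n m)}
  (hM : (instI23 B).IsMatching M)

include hM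

lemma stateX (i : Fin n) :
    (M (Res2.X i 0) = none ∧ M (Res2.X i 1) = none) ∨
    (M (Res2.X i 0) = some (Hos2.h i 0) ∧ M (Res2.X i 1) = some (Hos2.h i 1)) ∨
    (M (Res2.X i 0) = some (yLit B i true 0) ∧ M (Res2.X i 1) = some (yLit B i true 1)) := by
  have := hM.2.2.1 (Res2.X i 0, Res2.X i 1) ((mem_couples B).2 (Or.inl ⟨i, rfl⟩))
  rw [cp_X] at this
  rcases this with h | ⟨hp, hmem, h1, h2⟩
  · exact Or.inl h
  · simp only [List.mem_cons, List.mem_singleton, List.not_mem_nil, or_false] at hmem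
    rcases hmem with rfl | rfl
    · exact Or.inr (Or.inl ⟨h1, h2⟩)
    · exact Or.inr (Or.inr ⟨h1, h2⟩)

lemma stateXb (i : Fin n) :
    (M (Res2.Xb i 0) = none ∧ M (Res2.Xb i 1) = none) ∨
    (M (Res2.Xb i 0) = some (Hos2.h i 0) ∧ M (Res2.Xb i 1) = some (Hos2.h i 1)) ∨
    (M (Res2.Xb i 0) = some (yLit B i false 0) ∧ M (Res2.Xb i 1) = some (yLit B i false 1)) := by
  have := hM.2.2.1 (Res2.Xb i 0, Res2.Xb i 1) ((mem_couples B).2 (Or.inr (Or.inl ⟨i, rfl⟩)))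
  rw [cp_Xb] at this
  rcases this with h | ⟨hp, hmem, h1, h2⟩
  · exact Or.inl h
  · simp only [List.mem_cons, List.mem_singleton, List.not_mem_nil, or_false] at hmem
    rcases hmem with rfl | rfl
    · exact Or.inr (Or.inl ⟨h1, h2⟩)
    · exact Or.inr (Or.inr ⟨h1, h2⟩)

lemma statePQ (j : Fin m) (s : Fin 3) :
    (M (Res2.P j s) = none ∧ M (Res2.Q j s) = none) ∨
    (M (Res2.P j s) = some (Hos2.y j s) ∧ M (Res2.Q j s) = some (Hos2.y j (s+1))) := by
  have := hM.2.2.1 (Res2.P j s, Res2.Q j s) ((mem_couples B).2 (Or.inr (Or.inr ⟨j, s, rfl⟩)))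
  rw [cp_PQ] at this
  fin_cases s <;> simp_all

end

section
namespace HRC1
variable {α : Type} [DecidableEq α] {a x y : α} {l : List α}

lemma not_prefers_head : ¬ Prefers (a :: l) x a := by
  rintro ⟨-, -, hlt⟩
  simp [List.idxOf_cons_self] at hlt

lemma prefers_head (hb : y ∈ l) (hne : y ≠ a) : Prefers (a :: l) a y :=
  ⟨List.mem_cons_self (a := a) (l := l), List.mem_cons_of_mem a hb,
   by rw [List.idxOf_cons_self, List.idxOf_cons_ne _ hne.symm]; exact Nat.succ_pos _⟩

lemma prefers_cons (h : Prefers l x y) (hx : x ≠ a) (hy : y ≠ a) : Prefers (a :: l) x y :=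
  ⟨List.mem_cons_of_mem a h.1, List.mem_cons_of_mem a h.2.1,
   by rw [List.idxOf_cons_ne _ hx.symm, List.idxOf_cons_ne _ hy.symm]
      exact Nat.succ_lt_succ h.2.2⟩

end HRC1

variable {n m : ℕ} (B : E3SAT n m)

lemma yLit_eq_iff {i : Fin n} {b : Bool} {r : Fin 2} {j : Fin m} {s : Fin 3} :
    yLit B i b r = Hos2.y j s ↔ B.occ (i, b) r = (j, s) := by
  unfold yLit
  constructor
  · intro h
    injection h with h1 h2
    exact Prod.ext h1 h2
  · intro h; rw [h]

lemma xOfY_of_occ {i : Fin n} {b : Bool} {r : Fin 2} {j : Fin m} {s : Fin 3}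
    (h : B.occ (i, b) r = (j, s)) :
    xOfY B j s = (if b then Res2.X i r else Res2.Xb i r) := by
  have hc : B.clause j s = (i, b) := by
    have := B.occ_spec (i, b) r; rw [h] at this; exact this
  have hr01 : r = 0 ∨ r = 1 := by fin_cases r <;> [exact Or.inl rfl; exact Or.inr rfl]
  have hr : B.rIdx j s = r := by
    unfold E3SAT.rIdx
    rw [hc]
    rcases hr01 with rfl | rfl
    · rw [if_pos h]
    · rw [if_neg]
      intro h0
      exact B.occ_inj (i, b) (h0.trans h.symm)
  unfold xOfY
  rw [hc, hr]


section
variable {M : Res2 n m → Option (Hos2 n m)} (hM : (instI23 B).IsMatching M)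
include hM

lemma occH {r : Res2 n m} {i : Fin n} {k : Fin 2} (h : M r = some (Hos2.h i k)) :
    (k = 0 ∧ (r = Res2.X i 0 ∨ r = Res2.Xb i 0)) ∨
    (k = 1 ∧ (r = Res2.X i 1 ∨ r = Res2.Xb i 1)) := by
  have hs := hM.2.2.2 r (by rw [h]; rfl)
  rcases hs with hs | ⟨c, hc, hrc⟩
  · simp [instI23] at hs
  rcases (mem_couples B).1 hc with ⟨i', rfl⟩ | ⟨i', rfl⟩ | ⟨j', s', rfl⟩ <;>
    rcases hrc with rfl | rfl <;> dsimp only at h ⊢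
  · rcases stateX B hM i' with ⟨h1, -⟩ | ⟨h1, -⟩ | ⟨h1, -⟩ <;> rw [h] at h1 <;>
      simp_all [yLit]
  · rcases stateX B hM i' with ⟨-, h2⟩ | ⟨-, h2⟩ | ⟨-, h2⟩ <;> rw [h] at h2 <;>
      simp_all [yLit]
  · rcases stateXb B hM i' with ⟨h1, -⟩ | ⟨h1, -⟩ | ⟨h1, -⟩ <;> rw [h] at h1 <;>
      simp_all [yLit]
  · rcases stateXb B hM i' with ⟨-, h2⟩ | ⟨-, h2⟩ | ⟨-, h2⟩ <;> rw [h] at h2 <;>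
      simp_all [yLit]
  · rcases statePQ B hM j' s' with ⟨h1, -⟩ | ⟨h1, -⟩ <;> rw [h] at h1 <;> simp_all
  · rcases statePQ B hM j' s' with ⟨-, h2⟩ | ⟨-, h2⟩ <;> rw [h] at h2 <;> simp_all

lemma occY {r : Res2 n m} {j : Fin m} {s : Fin 3} (h : M r = some (Hos2.y j s)) :
    r = xOfY B j s ∨ r = Res2.P j s ∨ r = Res2.Q j (s + 2) := by
  have hs := hM.2.2.2 r (by rw [h]; rfl)
  rcases hs with hs | ⟨c, hc, hrc⟩
  · simp [instI23] at hs
  rcases (mem_couples B).1 hc with ⟨i', rfl⟩ | ⟨i', rfl⟩ | ⟨j', s', rfl⟩ <;>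
    rcases hrc with rfl | rfl <;> dsimp only at h ⊢
  · rcases stateX B hM i' with ⟨h1, -⟩ | ⟨h1, -⟩ | ⟨h1, -⟩ <;> rw [h] at h1
    · exact absurd h1 (by simp)
    · exact absurd h1 (by simp)
    · left
      have := (yLit_eq_iff B).1 (Option.some_injective _ h1.symm)
      rw [xOfY_of_occ B this]; simp
  · rcases stateX B hM i' with ⟨-, h2⟩ | ⟨-, h2⟩ | ⟨-, h2⟩ <;> rw [h] at h2
    · exact absurd h2 (by simp)
    · exact absurd h2 (by simp)
    · left
      have := (yLit_eq_iff B).1 (Option.some_injective _ h2.symm)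
      rw [xOfY_of_occ B this]; simp
  · rcases stateXb B hM i' with ⟨h1, -⟩ | ⟨h1, -⟩ | ⟨h1, -⟩ <;> rw [h] at h1
    · exact absurd h1 (by simp)
    · exact absurd h1 (by simp)
    · left
      have := (yLit_eq_iff B).1 (Option.some_injective _ h1.symm)
      rw [xOfY_of_occ B this]; simp
  · rcases stateXb B hM i' with ⟨-, h2⟩ | ⟨-, h2⟩ | ⟨-, h2⟩ <;> rw [h] at h2
    · exact absurd h2 (by simp)
    · exact absurd h2 (by simp)
    · left
      have := (yLit_eq_iff B).1 (Option.some_injective _ h2.symm)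
      rw [xOfY_of_occ B this]; simp
  · rcases statePQ B hM j' s' with ⟨h1, -⟩ | ⟨h1, -⟩ <;> rw [h] at h1
    · exact absurd h1 (by simp)
    · have := Option.some_injective _ h1.symm
      injection this with hj hs'
      subst hj; subst hs'
      simp
  · rcases statePQ B hM j' s' with ⟨-, h2⟩ | ⟨-, h2⟩ <;> rw [h] at h2
    · exact absurd h2 (by simp)
    · have := Option.some_injective _ h2.symm
      injection this with hj hs'
      subst hj
      right; right
      rw [← hs']
      congr 1
      fin_cases s' <;> decide

end
end

section
namespace HRC1
variable {α : Type} [DecidableEq α] {a b x y : α} {l : List α}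

lemma prefers_irrefl : ¬ Prefers l x x := by
  rintro ⟨-, -, hlt⟩; exact lt_irrefl _ hlt

lemma not_prefers₂ (hxa : x ≠ a) (hxb : x ≠ b) : ¬ Prefers (a :: b :: l) x b := by
  rintro ⟨-, -, hlt⟩
  rw [List.idxOf_cons_ne _ hxa.symm, List.idxOf_cons_ne _ hxb.symm] at hlt
  by_cases hba : b = a
  · subst hba; rw [List.idxOf_cons_self] at hlt; omega
  · rw [List.idxOf_cons_ne _ (Ne.symm hba), List.idxOf_cons_self] at hlt; omega

end HRC1

variable {n m : ℕ} (B : E3SAT n m)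

lemma fin3_cases : ∀ s t : Fin 3, t = s ∨ t = s + 1 ∨ t = s + 2 := by decide

lemma fin3_a12 : ∀ s : Fin 3, s + 1 + 2 = s := by decide
lemma fin3_a22 : ∀ s : Fin 3, s + 2 + 2 = s + 1 := by decide
lemma fin3_a21 : ∀ s : Fin 3, s + 2 + 1 = s := by decide
lemma fin3_a11 : ∀ s : Fin 3, s + 1 + 1 = s + 2 := by decide

lemma yLit_ne_h {i i' : Fin n} {b : Bool} {r : Fin 2} {k : Fin 2} :
    yLit B i b r ≠ Hos2.h i' k := by unfold yLit; simp

lemma xOfY_ne_P {j j' : Fin m} {s s' : Fin 3} : xOfY B j s ≠ Res2.P j' s' := by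
  rcases hcl : B.clause j s with ⟨i, b⟩; unfold xOfY; rw [hcl]; cases b <;> simp

lemma xOfY_ne_Q {j j' : Fin m} {s s' : Fin 3} : xOfY B j s ≠ Res2.Q j' s' := by
  rcases hcl : B.clause j s with ⟨i, b⟩; unfold xOfY; rw [hcl]; cases b <;> simp

lemma hpH0 (i : Fin n) : (instI23 B).hospPref (Hos2.h i 0) = [Res2.X i 0, Res2.Xb i 0] := by
  simp [instI23]

lemma hpH1 (i : Fin n) : (instI23 B).hospPref (Hos2.h i 1) = [Res2.Xb i 1, Res2.X i 1] := by
  simp [instI23]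

lemma hpY (j : Fin m) (s : Fin 3) :
    (instI23 B).hospPref (Hos2.y j s) = [xOfY B j s, Res2.P j s, Res2.Q j (s + 2)] := by
  fin_cases s <;> simp [instI23]

lemma cp_PQ' (j : Fin m) (s : Fin 3) : (instI23 B).couplePref (Res2.P j s, Res2.Q j s) =
    [(Hos2.y j s, Hos2.y j (s + 1))] := by
  rw [cp_PQ]; fin_cases s <;> rfl

/-- literal at position `s` of clause `j` is true under `f`. -/
def litT (f : Fin n → Bool) (j : Fin m) (s : Fin 3) : Bool :=
  f (B.clause j s).1 == (B.clause j s).2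

/-- couple `(p_j^s, q_j^s)` is to be matched. -/
def condC (f : Fin n → Bool) (j : Fin m) (s : Fin 3) : Bool :=
  litT B f j (s + 2) && !litT B f j s && !litT B f j (s + 1)

def mkM (f : Fin n → Bool) : Res2 n m → Option (Hos2 n m)
  | Res2.X i r => if f i then some (yLit B i true r) else some (Hos2.h i r)
  | Res2.Xb i r => if f i then some (Hos2.h i r) else some (yLit B i false r)
  | Res2.P j s => if condC B f j s then some (Hos2.y j s) else none
  | Res2.Q j s => if condC B f j s then some (Hos2.y j (s + 1)) else none

def W (f : Fin n → Bool) : Hos2 n m → Option (Res2 n m)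
  | Hos2.h i k => some (if f i then Res2.Xb i k else Res2.X i k)
  | Hos2.y j s =>
      if litT B f j s then some (xOfY B j s)
      else if condC B f j s then some (Res2.P j s)
      else if condC B f j (s + 2) then some (Res2.Q j (s + 2))
      else none

lemma W_spec (f : Fin n → Bool) : ∀ r hh, mkM B f r = some hh → W B f hh = some r := by
  intro r hh hr
  cases r with
  | X i r' =>
    by_cases hf : f i
    · rw [mkM, if_pos hf] at hr
      injection hr with hr; subst hr
      rcases hocc : B.occ (i, true) r' with ⟨j, s⟩
      have hy : yLit B i true r' = Hos2.y j s := by unfold yLit; rw [hocc]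
      rw [hy, W]
      have hcl : B.clause j s = (i, true) := by
        have := B.occ_spec (i, true) r'; rw [hocc] at this; exact this
      have hl : litT B f j s = true := by simp [litT, hcl, hf]
      rw [if_pos hl, xOfY_of_occ B hocc, if_pos rfl]
    · rw [mkM, if_neg hf] at hr
      injection hr with hr; subst hr
      rw [W, if_neg hf]
  | Xb i r' =>
    by_cases hf : f i
    · rw [mkM, if_pos hf] at hr
      injection hr with hr; subst hr
      rw [W, if_pos hf]
    · rw [mkM, if_neg hf] at hr
      injection hr with hr; subst hr
      rcases hocc : B.occ (i, false) r' with ⟨j, s⟩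
      have hy : yLit B i false r' = Hos2.y j s := by unfold yLit; rw [hocc]
      rw [hy, W]
      have hcl : B.clause j s = (i, false) := by
        have := B.occ_spec (i, false) r'; rw [hocc] at this; exact this
      have hl : litT B f j s = true := by
        simp [litT, hcl]
        simpa using hf
      rw [if_pos hl, xOfY_of_occ B hocc]
      simp
  | P j s =>
    by_cases hcnd : condC B f j s
    · rw [mkM, if_pos hcnd] at hr
      injection hr with hr; subst hr
      have hl : litT B f j s = false := by
        have := hcnd; simp [condC] at this; simp [this.1.2]
      rw [W, if_neg (by simp [hl]), if_pos hcnd]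
    · rw [mkM, if_neg hcnd] at hr; cases hr
  | Q j s =>
    by_cases hcnd : condC B f j s
    · rw [mkM, if_pos hcnd] at hr
      injection hr with hr; subst hr
      obtain ⟨⟨ht2, hns⟩, hns1⟩ : (litT B f j (s+2) = true ∧ litT B f j s = false)
          ∧ litT B f j (s+1) = false := by
        have := hcnd; simp [condC] at this; exact ⟨⟨this.1.1, this.1.2⟩, this.2⟩
      have hc1 : condC B f j (s + 1) = false := by
        simp [condC, fin3_a12, hns]
      rw [W, if_neg (by simp [hns1]), if_neg (by simp [hc1]), fin3_a12, if_pos hcnd]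
    · rw [mkM, if_neg hcnd] at hr; cases hr

lemma mkM_xOfY {f : Fin n → Bool} {j : Fin m} {s : Fin 3} (h : litT B f j s = true) :
    mkM B f (xOfY B j s) = some (Hos2.y j s) := by
  rcases hcl : B.clause j s with ⟨i, b⟩
  obtain ⟨r', hr'⟩ := B.occ_surj j s
  rw [hcl] at hr'
  rw [xOfY_of_occ B hr']
  have hfb : f i = b := by simpa [litT, hcl] using h
  cases b <;> simp [mkM, hfb, yLit, hr']
end

section
variable {n m : ℕ} (B : E3SAT n m)

lemma mkM_matching (f : Fin n → Bool) : (instI23 B).IsMatching (mkM B f) := by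
  refine ⟨?_, ?_, ?_, ?_⟩
  · intro r₁ r₂ hh h1 h2
    have w1 := W_spec B f r₁ hh h1
    have w2 := W_spec B f r₂ hh h2
    rw [w1] at w2
    exact Option.some.inj w2
  · intro r hr
    simp [instI23] at hr
  · intro c hc
    rcases (mem_couples B).1 hc with ⟨i, rfl⟩ | ⟨i, rfl⟩ | ⟨j, s, rfl⟩
    · right
      by_cases hf : f i
      · exact ⟨(yLit B i true 0, yLit B i true 1), by rw [cp_X]; simp,
          by simp [mkM, hf], by simp [mkM, hf]⟩
      · exact ⟨(Hos2.h i 0, Hos2.h i 1), by rw [cp_X]; simp,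
          by simp [mkM, hf], by simp [mkM, hf]⟩
    · right
      by_cases hf : f i
      · exact ⟨(Hos2.h i 0, Hos2.h i 1), by rw [cp_Xb]; simp,
          by simp [mkM, hf], by simp [mkM, hf]⟩
      · exact ⟨(yLit B i false 0, yLit B i false 1), by rw [cp_Xb]; simp,
          by simp [mkM, hf], by simp [mkM, hf]⟩
    · by_cases hcnd : condC B f j s
      · right
        exact ⟨(Hos2.y j s, Hos2.y j (s + 1)), by rw [cp_PQ']; simp,
          by simp [mkM, hcnd], by simp [mkM, hcnd]⟩
      · left
        constructor <;> simp [mkM, hcnd]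
  · intro r _
    right
    cases r with
    | X i r' =>
      refine ⟨(Res2.X i 0, Res2.X i 1), (mem_couples B).2 (Or.inl ⟨i, rfl⟩), ?_⟩
      fin_cases r' <;> simp
    | Xb i r' =>
      refine ⟨(Res2.Xb i 0, Res2.Xb i 1), (mem_couples B).2 (Or.inr (Or.inl ⟨i, rfl⟩)), ?_⟩
      fin_cases r' <;> simp
    | P j s => exact ⟨(Res2.P j s, Res2.Q j s), (mem_couples B).2 (Or.inr (Or.inr ⟨j, s, rfl⟩)),
        Or.inl rfl⟩
    | Q j s => exact ⟨(Res2.P j s, Res2.Q j s), (mem_couples B).2 (Or.inr (Or.inr ⟨j, s, rfl⟩)),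
        Or.inr rfl⟩

lemma mkM_stable (f : Fin n → Bool) (hsat : ∀ j, ∃ s, litT B f j s = true) :
    (instI23 B).Stable (mkM B f) := by
  refine ⟨mkM_matching B f, ?_, ?_⟩
  · intro r hh hb
    have := hb.1
    simp [instI23] at this
  intro c hp hb
  obtain ⟨hc, hhp, hpref, h1, h2⟩ := hb
  rcases (mem_couples B).1 hc with ⟨i, rfl⟩ | ⟨i, rfl⟩ | ⟨j, s, rfl⟩ <;>
    dsimp only at hhp hpref h1 h2
  · -- X couple
    rw [cp_X] at hhp
    by_cases hf : f i
    · have e0 : mkM B f (Res2.X i 0) = some (yLit B i true 0) := by simp [mkM, hf]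
      have e1 : mkM B f (Res2.X i 1) = some (yLit B i true 1) := by simp [mkM, hf]
      rcases hpref with ⟨ha, -⟩ | ⟨hp', hmem', ha, -, hpp⟩
      · rw [e0] at ha; cases ha
      · rw [cp_X] at hmem' hpp
        rw [e0] at ha
        have hpe : hp' = (yLit B i true 0, yLit B i true 1) := by
          rcases (by simpa using hmem' : hp' = (Hos2.h i 0, Hos2.h i 1) ∨ _) with rfl | rfl
          · exact absurd (Option.some.inj ha) (yLit_ne_h B)
          · rfl
        subst hpe
        rcases (by simpa using hhp : hp = (Hos2.h i 0, Hos2.h i 1) ∨ _) with rfl | rfl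
        · rcases h2 with h2 | h2
          · rw [e1] at h2; exact yLit_ne_h B (Option.some.inj h2)
          · rcases h2 with hfree | ⟨r', hr', hpp2⟩
            · exact hfree (Res2.Xb i 1) (by simp [mkM, hf])
            · have hw := W_spec B f r' _ hr'
              rw [W, if_pos hf] at hw
              obtain rfl := Option.some.inj hw
              rw [hpH1] at hpp2
              exact HRC1.not_prefers_head hpp2
        · exact HRC1.prefers_irrefl hpp
    · have e0 : mkM B f (Res2.X i 0) = some (Hos2.h i 0) := by simp [mkM, hf]
      rcases hpref with ⟨ha, -⟩ | ⟨hp', hmem', ha, -, hpp⟩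
      · rw [e0] at ha; cases ha
      · rw [cp_X] at hmem' hpp
        rw [e0] at ha
        have hpe : hp' = (Hos2.h i 0, Hos2.h i 1) := by
          rcases (by simpa using hmem' : hp' = (Hos2.h i 0, Hos2.h i 1) ∨ _) with rfl | rfl
          · rfl
          · exact absurd (Option.some.inj ha).symm (yLit_ne_h B)
        subst hpe
        exact HRC1.not_prefers_head hpp
  · -- Xb couple
    rw [cp_Xb] at hhp
    by_cases hf : f i
    · have e0 : mkM B f (Res2.Xb i 0) = some (Hos2.h i 0) := by simp [mkM, hf]
      rcases hpref with ⟨ha, -⟩ | ⟨hp', hmem', ha, -, hpp⟩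
      · rw [e0] at ha; cases ha
      · rw [cp_Xb] at hmem' hpp
        rw [e0] at ha
        have hpe : hp' = (Hos2.h i 0, Hos2.h i 1) := by
          rcases (by simpa using hmem' : hp' = (Hos2.h i 0, Hos2.h i 1) ∨ _) with rfl | rfl
          · rfl
          · exact absurd (Option.some.inj ha).symm (yLit_ne_h B)
        subst hpe
        exact HRC1.not_prefers_head hpp
    · have e0 : mkM B f (Res2.Xb i 0) = some (yLit B i false 0) := by simp [mkM, hf]
      rcases hpref with ⟨ha, -⟩ | ⟨hp', hmem', ha, -, hpp⟩
      · rw [e0] at ha; cases ha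
      · rw [cp_Xb] at hmem' hpp
        rw [e0] at ha
        have hpe : hp' = (yLit B i false 0, yLit B i false 1) := by
          rcases (by simpa using hmem' : hp' = (Hos2.h i 0, Hos2.h i 1) ∨ _) with rfl | rfl
          · exact absurd (Option.some.inj ha) (yLit_ne_h B)
          · rfl
        subst hpe
        rcases (by simpa using hhp : hp = (Hos2.h i 0, Hos2.h i 1) ∨ _) with rfl | rfl
        · rcases h1 with h1 | h1
          · rw [e0] at h1; exact yLit_ne_h B (Option.some.inj h1)
          · rcases h1 with hfree | ⟨r', hr', hpp2⟩
            · exact hfree (Res2.X i 0) (by simp [mkM, hf])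
            · have hw := W_spec B f r' _ hr'
              rw [W, if_neg hf] at hw
              obtain rfl := Option.some.inj hw
              rw [hpH0] at hpp2
              exact HRC1.not_prefers_head hpp2
        · exact HRC1.prefers_irrefl hpp
  · -- P/Q couple
    rw [cp_PQ'] at hhp
    obtain rfl : hp = (Hos2.y j s, Hos2.y j (s + 1)) := by simpa using hhp
    by_cases hcnd : condC B f j s
    · have e0 : mkM B f (Res2.P j s) = some (Hos2.y j s) := by simp [mkM, hcnd]
      rcases hpref with ⟨ha, -⟩ | ⟨hp', hmem', -, -, hpp⟩
      · rw [e0] at ha; cases ha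
      · rw [cp_PQ'] at hmem' hpp
        obtain rfl : hp' = (Hos2.y j s, Hos2.y j (s + 1)) := by simpa using hmem'
        exact HRC1.prefers_irrefl hpp
    · have e0 : mkM B f (Res2.P j s) = none := by simp [mkM, hcnd]
      have e1 : mkM B f (Res2.Q j s) = none := by simp [mkM, hcnd]
      have ho1 := h1.resolve_left (by rw [e0]; simp)
      have ho2 := h2.resolve_left (by rw [e1]; simp)
      have hls : litT B f j s = false := by
        by_contra hls'
        rw [Bool.not_eq_false] at hls'
        rcases ho1 with hfree | ⟨r', hr', hpp2⟩
        · exact hfree _ (mkM_xOfY B hls')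
        · have hw := W_spec B f r' _ hr'
          rw [W, if_pos hls'] at hw
          obtain rfl := Option.some.inj hw
          rw [hpY] at hpp2
          exact HRC1.not_prefers_head hpp2
      have hfree2 : HRC1.HospFree (mkM B f) (Hos2.y j (s + 1)) := by
        rcases ho2 with hfree | ⟨r', hr', hpp2⟩
        · exact hfree
        · exfalso
          have hw := W_spec B f r' _ hr'
          rw [W] at hw
          by_cases hl1 : litT B f j (s + 1)
          · rw [if_pos hl1] at hw
            obtain rfl := Option.some.inj hw
            rw [hpY] at hpp2
            exact HRC1.not_prefers_head hpp2
          · rw [if_neg hl1] at hw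
            by_cases hc1 : condC B f j (s + 1)
            · rw [if_pos hc1] at hw
              obtain rfl := Option.some.inj hw
              rw [hpY] at hpp2
              exact HRC1.not_prefers₂ (Ne.symm (xOfY_ne_Q B)) (by simp) hpp2
            · rw [if_neg hc1] at hw
              by_cases hc2 : condC B f j (s + 1 + 2)
              · rw [fin3_a12] at hc2; exact hcnd hc2
              · rw [if_neg hc2] at hw; cases hw
      have hl1' : litT B f j (s + 1) = false := by
        by_contra h'
        rw [Bool.not_eq_false] at h'
        exact hfree2 _ (mkM_xOfY B h')
      obtain ⟨t, ht⟩ := hsat j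
      rcases fin3_cases s t with rfl | rfl | rfl
      · rw [ht] at hls; cases hls
      · rw [ht] at hl1'; cases hl1'
      · exact hcnd (by simp [condC, ht, hls, hl1'])

end

section
variable {n m : ℕ} (B : E3SAT n m) {M : Res2 n m → Option (Hos2 n m)}
  (hM : (instI23 B).IsMatching M)
  (hnb : ∀ c hp, ¬ (instI23 B).BlockCouple M c hp)

include hM hnb

lemma atH (i : Fin n) :
    M (Res2.X i 0) = some (Hos2.h i 0) ∨ M (Res2.Xb i 0) = some (Hos2.h i 0) := by
  by_contra hcon
  push_neg at hcon
  obtain ⟨hx, hxb⟩ := hcon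
  apply hnb (Res2.X i 0, Res2.X i 1) (Hos2.h i 0, Hos2.h i 1)
  refine ⟨(mem_couples B).2 (Or.inl ⟨i, rfl⟩), by rw [cp_X]; simp, ?_, ?_, ?_⟩
  · rcases stateX B hM i with ⟨h1, h2⟩ | ⟨h1, -⟩ | ⟨h1, h2⟩
    · exact Or.inl ⟨h1, h2⟩
    · exact absurd h1 hx
    · right
      refine ⟨(yLit B i true 0, yLit B i true 1), by rw [cp_X]; simp, h1, h2, ?_⟩
      rw [cp_X]
      exact HRC1.prefers_head (by simp)
        (fun he => yLit_ne_h B (congrArg Prod.fst he))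
  · right; left
    intro r hr
    rcases occH B hM hr with ⟨-, h'⟩ | ⟨hk, -⟩
    · rcases h' with rfl | rfl
      · exact hx hr
      · exact hxb hr
    · exact absurd hk (by decide)
  · right; left
    intro r hr
    rcases occH B hM hr with ⟨hk, -⟩ | ⟨-, h'⟩
    · exact absurd hk (by decide)
    · rcases h' with rfl | rfl
      · rcases stateX B hM i with ⟨-, h2⟩ | ⟨h1, -⟩ | ⟨-, h2⟩
        · rw [hr] at h2; cases h2
        · exact hx h1
        · rw [hr] at h2
          exact yLit_ne_h B (Option.some.inj h2).symm
      · rcases stateXb B hM i with ⟨-, h2⟩ | ⟨h1, -⟩ | ⟨-, h2⟩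
        · rw [hr] at h2; cases h2
        · exact hxb h1
        · rw [hr] at h2
          exact yLit_ne_h B (Option.some.inj h2).symm

lemma clauseOcc (j : Fin m) : ∃ s, M (xOfY B j s) = some (Hos2.y j s) := by
  by_contra hcon
  push_neg at hcon
  by_cases hmatch : ∃ s₀, M (Res2.P j s₀) = some (Hos2.y j s₀)
  · obtain ⟨s₀, hp0⟩ := hmatch
    have hq0 : M (Res2.Q j s₀) = some (Hos2.y j (s₀ + 1)) :=
      ((statePQ B hM j s₀).resolve_left (fun hh => by have := hh.1; rw [hp0] at this; cases this)).2
    have hp1 : M (Res2.P j (s₀ + 1)) = none ∧ M (Res2.Q j (s₀ + 1)) = none := by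
      rcases statePQ B hM j (s₀ + 1) with h | ⟨hh1, -⟩
      · exact h
      · exact absurd (hM.1 _ _ _ hq0 hh1) (by simp)
    have hfree2 : HRC1.HospFree M (Hos2.y j (s₀ + 1 + 1)) := by
      intro r hr
      rcases occY B hM hr with rfl | rfl | rfl
      · exact hcon _ hr
      · have hq2 := ((statePQ B hM j (s₀ + 1 + 1)).resolve_left
          (fun hh => by have := hh.1; rw [hr] at this; cases this)).2
        rw [fin3_a11, fin3_a21] at hq2
        exact absurd (hM.1 _ _ _ hq2 hp0) (by simp)
      · rw [fin3_a11, fin3_a22] at hr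
        rw [hp1.2] at hr
        cases hr
    apply hnb (Res2.P j (s₀ + 1), Res2.Q j (s₀ + 1)) (Hos2.y j (s₀ + 1), Hos2.y j (s₀ + 1 + 1))
    refine ⟨(mem_couples B).2 (Or.inr (Or.inr ⟨j, s₀ + 1, rfl⟩)), by rw [cp_PQ']; simp,
      Or.inl hp1, Or.inr (Or.inr ⟨Res2.Q j s₀, hq0, ?_⟩), Or.inr (Or.inl hfree2)⟩
    rw [hpY, fin3_a12]
    exact HRC1.prefers_cons (HRC1.prefers_head (by simp) (by simp))
      (Ne.symm (xOfY_ne_P B)) (Ne.symm (xOfY_ne_Q B))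
  · push_neg at hmatch
    have hall : ∀ s, M (Res2.P j s) = none ∧ M (Res2.Q j s) = none := fun s =>
      (statePQ B hM j s).resolve_right (fun hh => hmatch s hh.1)
    have hfree : ∀ s, HRC1.HospFree M (Hos2.y j s) := by
      intro s r hr
      rcases occY B hM hr with rfl | rfl | rfl
      · exact hcon _ hr
      · rw [(hall s).1] at hr; cases hr
      · rw [(hall (s + 2)).2] at hr; cases hr
    apply hnb (Res2.P j 0, Res2.Q j 0) (Hos2.y j 0, Hos2.y j (0 + 1))
    exact ⟨(mem_couples B).2 (Or.inr (Or.inr ⟨j, 0, rfl⟩)), by rw [cp_PQ']; simp,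
      Or.inl ⟨(hall 0).1, (hall 0).2⟩, Or.inr (Or.inl (hfree 0)), Or.inr (Or.inl (hfree (0 + 1)))⟩

lemma sat_of_stable : B.Satisfiable := by
  refine ⟨fun i => decide (M (Res2.Xb i 0) = some (Hos2.h i 0)), fun j => ?_⟩
  obtain ⟨s, hocc⟩ := clauseOcc B hM hnb j
  refine ⟨s, ?_⟩
  rcases hcl : B.clause j s with ⟨i, b⟩
  have hr01 : B.rIdx j s = 0 ∨ B.rIdx j s = 1 := by
    generalize B.rIdx j s = r
    fin_cases r <;> [exact Or.inl rfl; exact Or.inr rfl]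
  unfold xOfY at hocc
  rw [hcl] at hocc
  dsimp only at hocc ⊢
  cases b
  · simp at hocc
    have h1 : M (Res2.Xb i 0) = some (yLit B i false 0) := by
      rcases stateXb B hM i with ⟨e1, e2⟩ | ⟨e1, e2⟩ | ⟨e1, -⟩
      · rcases hr01 with he | he <;> rw [he] at hocc
        · rw [e1] at hocc; cases hocc
        · rw [e2] at hocc; cases hocc
      · rcases hr01 with he | he <;> rw [he] at hocc
        · rw [e1] at hocc; simp at hocc
        · rw [e2] at hocc; simp at hocc
      · exact e1
    have hne : ¬(M (Res2.Xb i 0) = some (Hos2.h i 0)) := by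
      rw [h1]
      intro hh
      exact yLit_ne_h B (Option.some.inj hh)
    simp [hne]
  · simp at hocc
    have h1 : M (Res2.X i 0) = some (yLit B i true 0) := by
      rcases stateX B hM i with ⟨e1, e2⟩ | ⟨e1, e2⟩ | ⟨e1, -⟩
      · rcases hr01 with he | he <;> rw [he] at hocc
        · rw [e1] at hocc; cases hocc
        · rw [e2] at hocc; cases hocc
      · rcases hr01 with he | he <;> rw [he] at hocc
        · rw [e1] at hocc; simp at hocc
        · rw [e2] at hocc; simp at hocc
      · exact e1
    have hxb : M (Res2.Xb i 0) = some (Hos2.h i 0) := by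
      rcases atH B hM hnb i with hh | hh
      · rw [h1] at hh
        exact absurd (Option.some.inj hh) (yLit_ne_h B)
      · exact hh
    simp [hxb]

end


/-- `B` is satisfiable if and only if `I₂₃(B)` admits a stable matching. -/
theorem satisfiable_iff_instI23_admits_stable {n m : ℕ} (B : E3SAT n m) :
    B.Satisfiable ↔ ∃ M : Res2 n m → Option (Hos2 n m), (instI23 B).Stable M := by
  constructor
  · rintro ⟨f, hf⟩
    refine ⟨mkM B f, mkM_stable B f (fun j => ?_)⟩
    obtain ⟨s, hs⟩ := hf j
    exact ⟨s, by simp [litT, hs]⟩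
  · rintro ⟨M, hM, -, hs2⟩
    exact sat_of_stable B hM hs2
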